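/- arXiv:1312.0929 — 2 statements merged into one kernel-verified Lean document; each statement's English description precedes it below -/
import Mathlib

section
/- Let φ : [0, ∞) → [0, ∞) be differentiable with φ'(ρ) ≤ γ + β φ(ρ)^3 for positive constants γ, β. If 0 ≤ ρ ≤ 1 / (4 β^{1/3} (γ^{1/3} + β^{1/3} φ(0))^2), then γ^{1/3} + β^{1/3} φ(ρ) ≤ √2 (γ^{1/3} + β^{1/3} φ(0)), and in particular φ(ρ) ≤ (√2 − 1)(γ/β)^{1/3} + √2 φ(0). -/
set_option maxHeartbeats 1000000


/-- ODE comparison lemma: if `φ' ≤ γ + β φ³` on `[0,∞)`, then on the short time interval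
`ρ ≤ 1/(4 β^{1/3} (γ^{1/3} + β^{1/3} φ(0))²)` one has
`γ^{1/3} + β^{1/3} φ(ρ) ≤ √2 (γ^{1/3} + β^{1/3} φ(0))`, hence
`φ(ρ) ≤ (√2 − 1)(γ/β)^{1/3} + √2 φ(0)`. -/
theorem stmt0 (γ β : ℝ) (hγ : 0 < γ) (hβ : 0 < β) (φ : ℝ → ℝ)
    (hφ0 : ∀ ρ : ℝ, 0 ≤ ρ → 0 ≤ φ ρ)
    (hdiff : ∀ ρ : ℝ, 0 ≤ ρ → DifferentiableAt ℝ φ ρ)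
    (hineq : ∀ ρ : ℝ, 0 ≤ ρ → deriv φ ρ ≤ γ + β * (φ ρ) ^ 3)
    (ρ : ℝ) (hρ0 : 0 ≤ ρ)
    (hρ : ρ ≤ 1 / (4 * β ^ ((1:ℝ)/3) * (γ ^ ((1:ℝ)/3) + β ^ ((1:ℝ)/3) * φ 0) ^ 2)) :
    γ ^ ((1:ℝ)/3) + β ^ ((1:ℝ)/3) * φ ρ
        ≤ Real.sqrt 2 * (γ ^ ((1:ℝ)/3) + β ^ ((1:ℝ)/3) * φ 0) ∧
      φ ρ ≤ (Real.sqrt 2 - 1) * (γ / β) ^ ((1:ℝ)/3) + Real.sqrt 2 * φ 0 := by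
  set A : ℝ := γ ^ ((1:ℝ)/3) with hA
  set c : ℝ := β ^ ((1:ℝ)/3) with hc
  have hA0 : 0 < A := Real.rpow_pos_of_pos hγ _
  have hc0 : 0 < c := Real.rpow_pos_of_pos hβ _
  have hA3 : A ^ 3 = γ := by
    rw [hA, ← Real.rpow_natCast (γ ^ ((1:ℝ)/3)) 3, ← Real.rpow_mul hγ.le]
    norm_num
  have hc3 : c ^ 3 = β := by
    rw [hc, ← Real.rpow_natCast (β ^ ((1:ℝ)/3)) 3, ← Real.rpow_mul hβ.le]
    norm_num
  have hφ00 : 0 ≤ φ 0 := hφ0 0 le_rfl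
  set a : ℝ := A + c * φ 0 with ha
  have ha0 : 0 < a := by positivity
  set ψ : ℝ → ℝ := fun t => A + c * φ t with hψ
  have hψpos : ∀ t : ℝ, 0 ≤ t → 0 < ψ t := by
    intro t ht
    have := hφ0 t ht
    simp only [hψ]
    positivity
  set g : ℝ → ℝ := fun t => ((ψ t) ^ 2)⁻¹ + 2 * c * t with hg
  -- derivative of g at points t ≥ 0
  have hder : ∀ t : ℝ, 0 ≤ t →
      HasDerivAt g (-(2 * ψ t ^ 1 * (c * deriv φ t)) / (ψ t ^ 2) ^ 2 + 2 * c) t := by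
    intro t ht
    have h1 : HasDerivAt ψ (c * deriv φ t) t := by
      exact (((hdiff t ht).hasDerivAt).const_mul c).const_add A
    have h2 : HasDerivAt (fun s => (ψ s) ^ 2) (2 * ψ t ^ 1 * (c * deriv φ t)) t := by
      exact (h1.pow 2).congr_deriv (by norm_num)
    have h3 := h2.inv (by
      have := hψpos t ht
      positivity)
    have h4 : HasDerivAt (fun s : ℝ => 2 * c * s) (2 * c) t := by
      simpa using (hasDerivAt_id t).const_mul (2 * c)
    exact h3.add h4
  have hmono : MonotoneOn g (Set.Icc 0 ρ) := by
    apply monotoneOn_of_deriv_nonneg (convex_Icc 0 ρ)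
    · intro t ht
      exact ((hder t ht.1).continuousAt).continuousWithinAt
    · intro t ht
      rw [interior_Icc] at ht
      exact ((hder t ht.1.le).differentiableAt).differentiableWithinAt
    · intro t ht
      rw [interior_Icc] at ht
      have ht0 : 0 ≤ t := ht.1.le
      rw [(hder t ht0).deriv]
      have hψt : 0 < ψ t := hψpos t ht0
      have hφt : 0 ≤ φ t := hφ0 t ht0
      have hd : deriv φ t ≤ ψ t ^ 3 := by
        have h1 := hineq t ht0
        have : γ + β * φ t ^ 3 ≤ ψ t ^ 3 := by
          simp only [hψ]
          rw [← hA3, ← hc3]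
          nlinarith [mul_nonneg hc0.le hφt, sq_nonneg (c * φ t), sq_nonneg A,
            mul_nonneg (mul_nonneg hA0.le hA0.le) (mul_nonneg hc0.le hφt),
            mul_nonneg hA0.le (mul_nonneg (mul_nonneg hc0.le hφt) (mul_nonneg hc0.le hφt))]
        linarith
      have hkey : 2 * ψ t ^ 1 * (c * deriv φ t) / (ψ t ^ 2) ^ 2 ≤ 2 * c := by
        rw [div_le_iff₀ (by positivity)]
        nlinarith [mul_nonneg (mul_nonneg hc0.le hψt.le) (sub_nonneg.mpr hd),
          pow_pos hψt 3, mul_pos hc0 (pow_pos hψt 4)]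
      have : -(2 * ψ t ^ 1 * (c * deriv φ t)) / (ψ t ^ 2) ^ 2
          = -(2 * ψ t ^ 1 * (c * deriv φ t) / (ψ t ^ 2) ^ 2) := by ring
      rw [this]
      linarith
  have hg0 : g 0 ≤ g ρ :=
    hmono ⟨le_rfl, hρ0⟩ ⟨hρ0, le_rfl⟩ hρ0
  have hψρ : 0 < ψ ρ := hψpos ρ hρ0
  have hψ0 : ψ 0 = a := rfl
  have hstep : 1 / (2 * a ^ 2) ≤ ((ψ ρ) ^ 2)⁻¹ := by
    have h2cρ : 2 * c * ρ ≤ 1 / (2 * a ^ 2) := by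
      have h4 : 0 < 4 * c * a ^ 2 := by positivity
      have : ρ ≤ 1 / (4 * c * a ^ 2) := hρ
      calc 2 * c * ρ ≤ 2 * c * (1 / (4 * c * a ^ 2)) := by
            apply mul_le_mul_of_nonneg_left this (by positivity)
        _ = 1 / (2 * a ^ 2) := by field_simp; ring
    have hgg : (a ^ 2)⁻¹ ≤ ((ψ ρ) ^ 2)⁻¹ + 2 * c * ρ := by
      simpa [hg, hψ0] using hg0
    have : (a ^ 2)⁻¹ = 1 / a ^ 2 := one_div (a^2) |>.symm
    rw [this] at hgg
    have h1 : 1 / a ^ 2 - 1 / (2 * a ^ 2) = 1 / (2 * a ^ 2) := by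
      field_simp; ring
    linarith
  have hsq : ψ ρ ^ 2 ≤ 2 * a ^ 2 := by
    rw [inv_eq_one_div] at hstep
    have := (div_le_div_iff₀ (by positivity) (by positivity)).mp hstep
    nlinarith
  have hs2 : Real.sqrt 2 ^ 2 = 2 := Real.sq_sqrt (by norm_num)
  have hs0 : 0 ≤ Real.sqrt 2 := Real.sqrt_nonneg 2
  have part1 : ψ ρ ≤ Real.sqrt 2 * a := by
    nlinarith [mul_nonneg hs0 ha0.le, hψρ]
  refine ⟨part1, ?_⟩
  have hdivAc : (γ / β) ^ ((1:ℝ)/3) = A / c := Real.div_rpow hγ.le hβ.le _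
  rw [hdivAc]
  have h : φ ρ ≤ ((Real.sqrt 2 - 1) * A + Real.sqrt 2 * (c * φ 0)) / c := by
    rw [le_div_iff₀ hc0]
    have := part1
    simp only [hψ, ha] at this
    linarith
  have heq : ((Real.sqrt 2 - 1) * A + Real.sqrt 2 * (c * φ 0)) / c
      = (Real.sqrt 2 - 1) * (A / c) + Real.sqrt 2 * φ 0 := by
    field_simp
  rw [heq] at h
  exact h
end

section
/- Let φ : [0, ∞) → [0, ∞) be differentiable with φ'(ρ) ≤ γ + β φ(ρ)^{3/2} for positive constants γ, β. If 0 ≤ ρ < 1 / (β ((γ/β)^{2/3} + φ(0))^{1/2}), then ((γ/β)^{2/3} + φ(ρ))^{1/2} ≤ 2 ((γ/β)^{2/3} + φ(0))^{1/2}, and hence φ(ρ) ≤ 3 (γ/β)^{2/3} + 4 φ(0). -/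
lemma rpow_three_halves (x : ℝ) (hx : 0 ≤ x) : x ^ ((3:ℝ)/2) = x * Real.sqrt x := by
  rw [show (3:ℝ)/2 = 1 + 1/2 by norm_num, Real.rpow_add' hx (by norm_num),
    Real.rpow_one, Real.sqrt_eq_rpow]

/-- ODE comparison lemma: if `φ' ≤ γ + β φ^{3/2}` on `[0,∞)`, then for
`ρ < 1/(β ((γ/β)^{2/3} + φ(0))^{1/2})` one has
`((γ/β)^{2/3} + φ(ρ))^{1/2} ≤ 2 ((γ/β)^{2/3} + φ(0))^{1/2}`, hence
`φ(ρ) ≤ 3 (γ/β)^{2/3} + 4 φ(0)`. -/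
theorem stmt1 (γ β : ℝ) (hγ : 0 < γ) (hβ : 0 < β) (φ : ℝ → ℝ)
    (hφ0 : ∀ ρ : ℝ, 0 ≤ ρ → 0 ≤ φ ρ)
    (hdiff : ∀ ρ : ℝ, 0 ≤ ρ → DifferentiableAt ℝ φ ρ)
    (hineq : ∀ ρ : ℝ, 0 ≤ ρ → deriv φ ρ ≤ γ + β * (φ ρ) ^ ((3:ℝ)/2))
    (ρ : ℝ) (hρ0 : 0 ≤ ρ)
    (hρ : ρ < 1 / (β * Real.sqrt ((γ / β) ^ ((2:ℝ)/3) + φ 0))) :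
    Real.sqrt ((γ / β) ^ ((2:ℝ)/3) + φ ρ)
        ≤ 2 * Real.sqrt ((γ / β) ^ ((2:ℝ)/3) + φ 0) ∧
      φ ρ ≤ 3 * (γ / β) ^ ((2:ℝ)/3) + 4 * φ 0 := by
  have hc : 0 < γ / β := div_pos hγ hβ
  set a : ℝ := (γ / β) ^ ((2:ℝ)/3) with ha_def
  have ha : 0 < a := Real.rpow_pos_of_pos hc _
  have ha32 : a * Real.sqrt a = γ / β := by
    rw [← rpow_three_halves a ha.le, ha_def, ← Real.rpow_mul hc.le]
    norm_num
  -- positivity of u x = a + φ x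
  have hu : ∀ x : ℝ, 0 ≤ x → 0 < a + φ x := fun x hx =>
    add_pos_of_pos_of_nonneg ha (hφ0 x hx)
  -- key derivative bound
  have hkey : ∀ x : ℝ, 0 ≤ x →
      deriv φ x ≤ β * ((a + φ x) * Real.sqrt (a + φ x)) := by
    intro x hx
    have h1 := hineq x hx
    have hφx := hφ0 x hx
    rw [rpow_three_halves _ hφx] at h1
    have h2 : a * Real.sqrt a + φ x * Real.sqrt (φ x)
        ≤ (a + φ x) * Real.sqrt (a + φ x) := by
      have hsa : Real.sqrt a ≤ Real.sqrt (a + φ x) :=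
        Real.sqrt_le_sqrt (by linarith)
      have hsb : Real.sqrt (φ x) ≤ Real.sqrt (a + φ x) :=
        Real.sqrt_le_sqrt (by linarith)
      nlinarith [Real.sqrt_nonneg a, Real.sqrt_nonneg (φ x), ha.le, hφx]
    have hγeq : γ = β * (a * Real.sqrt a) := by rw [ha32]; field_simp
    calc deriv φ x ≤ γ + β * (φ x * Real.sqrt (φ x)) := h1
      _ = β * (a * Real.sqrt a + φ x * Real.sqrt (φ x)) := by rw [hγeq]; ring
      _ ≤ β * ((a + φ x) * Real.sqrt (a + φ x)) := by
          exact mul_le_mul_of_nonneg_left h2 hβ.le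
  -- the auxiliary function
  set h : ℝ → ℝ := fun x => (Real.sqrt (a + φ x))⁻¹ + β/2 * x with hh_def
  have hasD : ∀ x : ℝ, 0 ≤ x → HasDerivAt h
      (-(deriv φ x / (2 * Real.sqrt (a + φ x))) / (Real.sqrt (a + φ x))^2 + β/2) x := by
    intro x hx
    have hux := hu x hx
    have hsx : Real.sqrt (a + φ x) ≠ 0 := (Real.sqrt_pos.mpr hux).ne'
    have hφd : HasDerivAt (fun y => a + φ y) (deriv φ x) x :=
      ((hdiff x hx).hasDerivAt).const_add a
    have hsq : HasDerivAt (fun y => Real.sqrt (a + φ y))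
        (deriv φ x / (2 * Real.sqrt (a + φ x))) x := by
      have := (Real.hasDerivAt_sqrt (x := a + φ x) hux.ne').comp x hφd
      rw [show deriv φ x / (2 * Real.sqrt (a + φ x)) = 1 / (2 * Real.sqrt (a + φ x)) * deriv φ x by ring]
      exact this
    have hinv := hsq.inv hsx
    have hlin : HasDerivAt (fun y : ℝ => β/2 * y) (β/2) x := by
      simpa using (hasDerivAt_id x).const_mul (β/2)
    exact hinv.add hlin
  have hderiv_nonneg : ∀ x : ℝ, 0 ≤ x →
      0 ≤ -(deriv φ x / (2 * Real.sqrt (a + φ x))) / (Real.sqrt (a + φ x))^2 + β/2 := by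
    intro x hx
    have hux := hu x hx
    set s := Real.sqrt (a + φ x) with hs_def
    have hs : 0 < s := Real.sqrt_pos.mpr hux
    have hs2 : s^2 = a + φ x := Real.sq_sqrt hux.le
    have hb : deriv φ x ≤ β * (s^2 * s) := by rw [hs2]; exact hkey x hx
    have : deriv φ x / (2 * s) / s^2 ≤ β/2 := by
      rw [div_div, div_le_div_iff₀ (by positivity) (by norm_num)]
      nlinarith
    have hng : -(deriv φ x / (2 * s)) / s ^ 2 = -(deriv φ x / (2 * s) / s ^ 2) :=
      neg_div _ _
    rw [hng]
    linarith
  -- monotonicity of h on [0, ρ]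
  have hmono : MonotoneOn h (Set.Icc 0 ρ) := by
    apply monotoneOn_of_deriv_nonneg (convex_Icc 0 ρ)
    · intro x hx
      exact (hasD x hx.1).continuousAt.continuousWithinAt
    · intro x hx
      rw [interior_Icc] at hx
      exact (hasD x hx.1.le).differentiableAt.differentiableWithinAt
    · intro x hx
      rw [interior_Icc] at hx
      rw [(hasD x hx.1.le).deriv]
      exact hderiv_nonneg x hx.1.le
  have h0ρ : h 0 ≤ h ρ :=
    hmono (Set.left_mem_Icc.mpr hρ0) (Set.right_mem_Icc.mpr hρ0) hρ0
  -- unpack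
  set sE := Real.sqrt (a + φ 0) with hsE_def
  set sR := Real.sqrt (a + φ ρ) with hsR_def
  have hE : 0 < a + φ 0 := hu 0 le_rfl
  have hR : 0 < a + φ ρ := hu ρ hρ0
  have hsE : 0 < sE := Real.sqrt_pos.mpr hE
  have hsR : 0 < sR := Real.sqrt_pos.mpr hR
  have hρβ : ρ * (β * sE) < 1 := by
    rw [lt_div_iff₀ (by positivity)] at hρ
    exact hρ
  have h0ρ' : sE⁻¹ ≤ sR⁻¹ + β/2 * ρ := by
    have : h 0 = sE⁻¹ := by simp [hh_def, hsE_def]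
    have h2 : h ρ = sR⁻¹ + β/2 * ρ := by simp [hh_def, hsR_def]
    rw [this, h2] at h0ρ
    exact h0ρ
  have hinv1 : sE * sE⁻¹ = 1 := mul_inv_cancel₀ hsE.ne'
  have hinv2 : sR * sR⁻¹ = 1 := mul_inv_cancel₀ hsR.ne'
  have hmain : sR ≤ 2 * sE := by
    -- multiply h0ρ' by sR * sE
    have hmul : sR ≤ sE + β/2 * ρ * (sR * sE) := by
      have := mul_le_mul_of_nonneg_left h0ρ' (by positivity : (0:ℝ) ≤ sR * sE)
      calc sR = sR * sE * sE⁻¹ := by rw [mul_assoc, hinv1, mul_one]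
        _ ≤ sR * sE * (sR⁻¹ + β/2 * ρ) := by
            exact mul_le_mul_of_nonneg_left h0ρ' (by positivity)
        _ = sE * (sR * sR⁻¹) + β/2 * ρ * (sR * sE) := by ring
        _ = sE + β/2 * ρ * (sR * sE) := by rw [hinv2, mul_one]
    nlinarith [mul_pos hsR hsE]
  constructor
  · exact hmain
  · have hsq : a + φ ρ ≤ 4 * (a + φ 0) := by
      have h1 : sR^2 ≤ (2*sE)^2 := by nlinarith
      rw [hsR_def, hsE_def, Real.sq_sqrt hR.le] at h1
      have h2 : (2 * Real.sqrt (a + φ 0))^2 = 4 * (a + φ 0) := by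
        rw [mul_pow, Real.sq_sqrt hE.le]; ring
      linarith [h1.trans_eq h2]
    linarith
end
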